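/- Let −π < θ ≤ π with |θ| ≠ π/2 and θ ≠ π. The function u(z) = 3 Cosh^{−2}( (e^{−iθ}/2) z ), initially defined for real z, satisfies the ODE −u'' + e^{−2iθ} u = (e^{−2iθ}/2) u² on ℝ, and its meromorphic extension to ℂ has poles exactly at the points z = e^{i(θ+π/2)} (2k+1)π for k ∈ ℤ. -/

import Mathlib

open Complex Filter

noncomputable def uTheta (θ : ℝ) (z : ℂ) : ℂ :=
  3 / (Complex.cosh (Complex.exp (-(θ : ℂ) * Complex.I) / 2 * z)) ^ 2

noncomputable def poleSet (θ : ℝ) : Set ℂ :=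
  Set.range (fun k : ℤ =>
    Complex.exp (((θ : ℂ) + (Real.pi : ℂ) / 2) * Complex.I) * (2 * (k : ℂ) + 1)
      * (Real.pi : ℂ))

noncomputable def aTh (θ : ℝ) : ℂ := Complex.exp (-(θ : ℂ) * Complex.I) / 2

lemma aTh_ne (θ : ℝ) : aTh θ ≠ 0 := by
  simp [aTh, Complex.exp_ne_zero]

lemma uTheta_eq (θ : ℝ) : uTheta θ = fun z => 3 / (Complex.cosh (aTh θ * z)) ^ 2 := rfl

lemma exp_shift (θ : ℝ) :
    Complex.exp (((θ : ℂ) + (Real.pi : ℂ) / 2) * Complex.I)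
      = Complex.exp ((θ : ℂ) * Complex.I) * Complex.I := by
  rw [add_mul, Complex.exp_add]
  congr 1
  rw [Complex.exp_mul_I]
  norm_cast
  simp [Complex.cos_pi_div_two, Complex.sin_pi_div_two]

lemma key_prod (θ : ℝ) (k : ℤ) :
    aTh θ * (Complex.exp (((θ : ℂ) + (Real.pi : ℂ) / 2) * Complex.I)
        * (2 * (k : ℂ) + 1) * (Real.pi : ℂ)) * Complex.I
      = (2 * ((-k - 1 : ℤ) : ℂ) + 1) * (Real.pi : ℂ) / 2 := by
  rw [exp_shift, aTh]
  have h : Complex.exp (-(θ : ℂ) * Complex.I) * Complex.exp ((θ : ℂ) * Complex.I) = 1 := by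
    rw [← Complex.exp_add]; ring_nf; exact Complex.exp_zero
  have hI : (Complex.I : ℂ) ^ 2 = -1 := Complex.I_sq
  push_cast
  linear_combination ((2 * (k : ℂ) + 1) * (Real.pi : ℂ) / 2 * Complex.I ^ 2) * h +
    ((2 * (k : ℂ) + 1) * (Real.pi : ℂ) / 2) * hI

lemma cosh_zero_iff (θ : ℝ) (z : ℂ) :
    Complex.cosh (aTh θ * z) = 0 ↔ z ∈ poleSet θ := by
  rw [← Complex.cos_mul_I, Complex.cos_eq_zero_iff]
  constructor
  · rintro ⟨k, hk⟩
    refine ⟨-k - 1, ?_⟩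
    set P := Complex.exp (((θ : ℂ) + (Real.pi : ℂ) / 2) * Complex.I)
      * (2 * ((-k - 1 : ℤ) : ℂ) + 1) * (Real.pi : ℂ) with hP
    have h2 := key_prod θ (-k - 1)
    have e1 : (aTh θ * Complex.I) * P = (aTh θ * Complex.I) * z := by
      calc (aTh θ * Complex.I) * P = aTh θ * P * Complex.I := by ring
        _ = aTh θ * z * Complex.I := by rw [h2, hk]; push_cast; ring
        _ = (aTh θ * Complex.I) * z := by ring
    have := mul_left_cancel₀ (mul_ne_zero (aTh_ne θ) Complex.I_ne_zero) e1
    simpa [hP] using this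
  · rintro ⟨k, hk⟩
    refine ⟨-k - 1, ?_⟩
    rw [← hk]
    have := key_prod θ k
    exact this

noncomputable def vTh (θ : ℝ) (z : ℂ) : ℂ :=
  -6 * aTh θ * Complex.sinh (aTh θ * z) / (Complex.cosh (aTh θ * z)) ^ 3

lemma hasDerivAt_mulA (θ : ℝ) (z : ℂ) :
    HasDerivAt (fun w : ℂ => aTh θ * w) (aTh θ) z := by
  simpa using (hasDerivAt_id z).const_mul (aTh θ)

lemma hasDerivAt_coshA (θ : ℝ) (z : ℂ) :
    HasDerivAt (fun w => Complex.cosh (aTh θ * w))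
      (Complex.sinh (aTh θ * z) * aTh θ) z :=
  (Complex.hasDerivAt_cosh (aTh θ * z)).comp z (hasDerivAt_mulA θ z)

lemma hasDerivAt_sinhA (θ : ℝ) (z : ℂ) :
    HasDerivAt (fun w => Complex.sinh (aTh θ * w))
      (Complex.cosh (aTh θ * z) * aTh θ) z :=
  (Complex.hasDerivAt_sinh (aTh θ * z)).comp z (hasDerivAt_mulA θ z)

lemma hasDerivAt_u (θ : ℝ) (z : ℂ) (hz : Complex.cosh (aTh θ * z) ≠ 0) :
    HasDerivAt (uTheta θ) (vTh θ z) z := by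
  have h := (hasDerivAt_const z (3 : ℂ)).fun_div ((hasDerivAt_coshA θ z).fun_pow 2)
    (pow_ne_zero 2 hz)
  rw [uTheta_eq]
  refine h.congr_deriv ?_
  rw [vTh]
  field_simp
  ring

lemma hasDerivAt_v (θ : ℝ) (z : ℂ) (hz : Complex.cosh (aTh θ * z) ≠ 0) :
    HasDerivAt (vTh θ)
      ((-6 * aTh θ ^ 2 * Complex.cosh (aTh θ * z) ^ 4
          + 18 * aTh θ ^ 2 * Complex.sinh (aTh θ * z) ^ 2 * Complex.cosh (aTh θ * z) ^ 2)
        / Complex.cosh (aTh θ * z) ^ 6) z := by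
  have hN : HasDerivAt (fun w => -6 * aTh θ * Complex.sinh (aTh θ * w))
      (-6 * aTh θ * (Complex.cosh (aTh θ * z) * aTh θ)) z :=
    (hasDerivAt_sinhA θ z).const_mul _
  have hD : HasDerivAt (fun w => (Complex.cosh (aTh θ * w)) ^ 3)
      (3 * Complex.cosh (aTh θ * z) ^ 2 * (Complex.sinh (aTh θ * z) * aTh θ)) z :=
    (hasDerivAt_coshA θ z).pow 3
  have h := hN.fun_div hD (pow_ne_zero 3 hz)
  refine h.congr_deriv ?_
  field_simp
  ring

lemma cos_ne_zero' (θ : ℝ) (hθ₁ : -Real.pi < θ) (hθ₂ : θ ≤ Real.pi)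
    (hθ₃ : |θ| ≠ Real.pi / 2) : Real.cos θ ≠ 0 := by
  intro h
  obtain ⟨k, hk⟩ := Real.cos_eq_zero_iff.mp h
  have hπ := Real.pi_pos
  have e1 : -Real.pi < (2 * (k : ℝ) + 1) * Real.pi / 2 := by rw [← hk]; exact hθ₁
  have e2 : (2 * (k : ℝ) + 1) * Real.pi / 2 ≤ Real.pi := by rw [← hk]; exact hθ₂
  have f1 : (-2 : ℝ) < 2 * (k : ℝ) + 1 := by nlinarith
  have f2 : 2 * (k : ℝ) + 1 ≤ 2 := by nlinarith
  have g1 : (-2 : ℤ) < 2 * k + 1 := by exact_mod_cast (by push_cast; linarith : ((-2 : ℤ) : ℝ) < ((2 * k + 1 : ℤ) : ℝ))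
  have g2 : (2 * k + 1 : ℤ) ≤ 2 := by exact_mod_cast (by push_cast; linarith : ((2 * k + 1 : ℤ) : ℝ) ≤ ((2 : ℤ) : ℝ))
  have hk1' : (-1 : ℤ) ≤ k := by omega
  have hk2' : k ≤ 0 := by omega
  interval_cases k
  · apply hθ₃
    rw [hk]; push_cast
    rw [show (2 * (-1 : ℝ) + 1) * Real.pi / 2 = -(Real.pi / 2) by ring, abs_neg,
      _root_.abs_of_nonneg (by positivity)]
  · apply hθ₃
    rw [hk]; push_cast
    rw [show (2 * (0 : ℝ) + 1) * Real.pi / 2 = Real.pi / 2 by ring,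
      _root_.abs_of_nonneg (by positivity)]

lemma real_not_pole (θ : ℝ) (hc : Real.cos θ ≠ 0) (x : ℝ) :
    Complex.cosh (aTh θ * (x : ℂ)) ≠ 0 := by
  intro h
  obtain ⟨k, hk⟩ := (cosh_zero_iff θ (x : ℂ)).mp h
  have him := congrArg Complex.im hk
  have hre : (Complex.exp (((θ : ℂ) + (Real.pi : ℂ) / 2) * Complex.I)).im
      = Real.cos θ := by
    have h3 : ((θ : ℂ) + (Real.pi : ℂ) / 2) = ((θ + Real.pi / 2 : ℝ) : ℂ) := by push_cast; ring
    rw [h3, Complex.exp_ofReal_mul_I_im, Real.sin_add_pi_div_two]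
  have h2 : (2 * (k : ℂ) + 1) * (Real.pi : ℂ) = (((2 * (k : ℝ) + 1) * Real.pi : ℝ) : ℂ) := by
    push_cast; ring
  simp only at him
  rw [mul_assoc, h2, Complex.mul_im] at him
  simp only [Complex.ofReal_im, Complex.ofReal_re, mul_zero, add_zero] at him
  rw [hre] at him
  have hπ := Real.pi_pos
  have hk0 : (2 * (k : ℝ) + 1) ≠ 0 := by
    intro h0
    have h5 : ((2 * k + 1 : ℤ) : ℝ) = 0 := by push_cast; linarith
    have : (2 * k + 1 : ℤ) = 0 := by exact_mod_cast h5
    omega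
  exact (mul_ne_zero hc (mul_ne_zero hk0 (ne_of_gt hπ))) (by linarith)

theorem sharpness_example (θ : ℝ) (hθ₁ : -Real.pi < θ) (hθ₂ : θ ≤ Real.pi)
    (hθ₃ : |θ| ≠ Real.pi / 2) (hθ₄ : θ ≠ Real.pi) :
    (∀ x : ℝ,
      -(iteratedDeriv 2 (uTheta θ) (x : ℂ))
          + Complex.exp (-2 * (θ : ℂ) * Complex.I) * uTheta θ (x : ℂ)
        = Complex.exp (-2 * (θ : ℂ) * Complex.I) / 2 * (uTheta θ (x : ℂ)) ^ 2) ∧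
    (∀ z : ℂ, z ∉ poleSet θ → DifferentiableAt ℂ (uTheta θ) z) ∧
    (∀ z ∈ poleSet θ,
      Tendsto (fun w => ‖uTheta θ w‖) (nhdsWithin z {z}ᶜ) atTop) := by
  have hc := cos_ne_zero' θ hθ₁ hθ₂ hθ₃
  refine ⟨?_, ?_, ?_⟩
  · intro x
    have hx : Complex.cosh (aTh θ * (x : ℂ)) ≠ 0 := real_not_pole θ hc x
    have hcont : Continuous fun z : ℂ => Complex.cosh (aTh θ * z) :=
      Complex.continuous_cosh.comp (continuous_const.mul continuous_id)
    have hopen : IsOpen {z : ℂ | Complex.cosh (aTh θ * z) ≠ 0} :=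
      IsOpen.preimage hcont isOpen_compl_singleton
    have hev : deriv (uTheta θ) =ᶠ[nhds (x : ℂ)] vTh θ := by
      filter_upwards [hopen.mem_nhds hx] with w hw
      exact (hasDerivAt_u θ w hw).deriv
    have h2 : iteratedDeriv 2 (uTheta θ) (x : ℂ) = deriv (vTh θ) (x : ℂ) := by
      rw [iteratedDeriv_succ, iteratedDeriv_one]
      exact hev.deriv_eq
    have ha2 : Complex.exp (-2 * (θ : ℂ) * Complex.I) = 4 * aTh θ ^ 2 := by
      have h4 : Complex.exp (-(θ : ℂ) * Complex.I) ^ 2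
          = Complex.exp (-2 * (θ : ℂ) * Complex.I) := by
        rw [← Complex.exp_nat_mul]; congr 1; push_cast; ring
      rw [aTh, div_pow, ← h4]; ring
    have hs : Complex.sinh (aTh θ * (x : ℂ)) ^ 2
        = Complex.cosh (aTh θ * (x : ℂ)) ^ 2 - 1 := Complex.sinh_sq _
    rw [h2, (hasDerivAt_v θ x hx).deriv, uTheta_eq, ha2]
    simp only
    rw [hs]
    field_simp
    ring
  · intro z hz
    exact (hasDerivAt_u θ z (fun h0 => hz ((cosh_zero_iff θ z).mp h0))).differentiableAt
  · intro z hz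
    have hz0 : Complex.cosh (aTh θ * z) = 0 := (cosh_zero_iff θ z).mpr hz
    have hdiff : Differentiable ℂ (fun w => Complex.cosh (aTh θ * w)) :=
      fun w => (hasDerivAt_coshA θ w).differentiableAt
    have han : AnalyticAt ℂ (fun w => Complex.cosh (aTh θ * w)) z := hdiff.analyticAt z
    rcases han.eventually_eq_zero_or_eventually_ne_zero with h0 | h1
    · exfalso
      have hd : deriv (fun w => Complex.cosh (aTh θ * w)) z = 0 := by
        have hee : (fun w => Complex.cosh (aTh θ * w)) =ᶠ[nhds z] (fun _ => (0 : ℂ)) := h0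
        rw [hee.deriv_eq]; simp
      rw [(hasDerivAt_coshA θ z).deriv] at hd
      have hs : Complex.sinh (aTh θ * z) ^ 2 = -1 := by rw [Complex.sinh_sq, hz0]; ring
      have hsne : Complex.sinh (aTh θ * z) ≠ 0 := by
        intro h; rw [h] at hs; norm_num at hs
      exact (mul_ne_zero hsne (aTh_ne θ)) hd
    · have hcont2 : Tendsto (fun w => ‖Complex.cosh (aTh θ * w) ^ 2‖)
          (nhdsWithin z {z}ᶜ) (nhds 0) := by
        have hct : ContinuousAt (fun w => ‖Complex.cosh (aTh θ * w) ^ 2‖) z :=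
          (((hdiff.continuous.pow 2).norm).continuousAt)
        have h' := hct.tendsto.mono_left (nhdsWithin_le_nhds (s := {z}ᶜ))
        simpa [hz0] using h'
      have hpos : ∀ᶠ w in nhdsWithin z {z}ᶜ, 0 < ‖Complex.cosh (aTh θ * w) ^ 2‖ := by
        filter_upwards [h1] with w hw
        exact norm_pos_iff.mpr (pow_ne_zero 2 hw)
      have hT : Tendsto (fun w => ‖Complex.cosh (aTh θ * w) ^ 2‖)
          (nhdsWithin z {z}ᶜ) (nhdsWithin (0:ℝ) (Set.Ioi 0)) :=
        tendsto_nhdsWithin_of_tendsto_nhds_of_eventually_within _ hcont2 hpos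
      have hinv := hT.inv_tendsto_nhdsGT_zero
      have heq : (fun w => ‖uTheta θ w‖)
          = fun w => 3 * ‖Complex.cosh (aTh θ * w) ^ 2‖⁻¹ := by
        funext w
        rw [uTheta_eq]
        simp [norm_div, div_eq_mul_inv]
      rw [heq]
      exact (hinv.congr (fun w => rfl)).const_mul_atTop (by norm_num : (0:ℝ) < 3)
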